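/- Let μ be a probability distribution on a finite subset P of ℝ^D with centroid c(P) (mean of P under μ). If c₁ is drawn from μ and cost(P,c₁) = Σ_{x∈P} μ-weighted ‖x−c₁‖², then E[cost(P,c₁)] = 2·Σ_x μ(x)‖x−c(P)‖² when μ is uniform; i.e., choosing a uniformly random point of a finite cluster as its center gives expected cost exactly twice the optimal 1-means cost of the cluster. -/

import Mathlib

open Finset

lemma aux_sum_sub_mean {D : ℕ} (P : Finset (EuclideanSpace ℝ (Fin D))) :
    ∑ p ∈ P, (p - (P.card : ℝ)⁻¹ • ∑ q ∈ P, q) = 0 := by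
  rcases P.eq_empty_or_nonempty with h | h
  · simp [h]
  have hc : (P.card : ℝ) ≠ 0 := by positivity
  rw [Finset.sum_sub_distrib, Finset.sum_const, ← Nat.cast_smul_eq_nsmul ℝ, smul_smul,
    mul_inv_cancel₀ hc, one_smul, sub_self]

lemma aux_key {D : ℕ} (P : Finset (EuclideanSpace ℝ (Fin D)))
    (z : EuclideanSpace ℝ (Fin D)) :
    ∑ p ∈ P, ‖p - z‖ ^ 2
      = ∑ p ∈ P, ‖p - (P.card : ℝ)⁻¹ • ∑ q ∈ P, q‖ ^ 2
        + P.card * ‖z - (P.card : ℝ)⁻¹ • ∑ q ∈ P, q‖ ^ 2 := by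
  set μ := (P.card : ℝ)⁻¹ • ∑ q ∈ P, q with hμ
  have h1 : ∀ p ∈ P, ‖p - z‖ ^ 2
      = ‖p - μ‖ ^ 2 - 2 * inner ℝ (p - μ) (z - μ) + ‖z - μ‖ ^ 2 := by
    intro p _
    have : p - z = (p - μ) - (z - μ) := by abel
    rw [this, norm_sub_sq_real]
  rw [Finset.sum_congr rfl h1, Finset.sum_add_distrib, Finset.sum_sub_distrib,
    ← Finset.mul_sum, ← sum_inner, aux_sum_sub_mean, inner_zero_left,
    Finset.sum_const, nsmul_eq_mul]
  ring

theorem stmt_18 {D : ℕ} (P : Finset (EuclideanSpace ℝ (Fin D))) (hP : P.Nonempty) :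
    ((P.card : ℝ))⁻¹ * ∑ c₁ ∈ P, ∑ p ∈ P, ‖p - c₁‖ ^ 2
      = 2 * ∑ p ∈ P, ‖p - (P.card : ℝ)⁻¹ • ∑ q ∈ P, q‖ ^ 2 := by
  have hc : (P.card : ℝ) ≠ 0 := by positivity
  rw [Finset.sum_congr rfl (fun c _ => aux_key P c), Finset.sum_add_distrib,
    Finset.sum_const, ← Finset.mul_sum, nsmul_eq_mul]
  field_simp
  ring
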